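/- If ρ is a PPT density matrix on ℂ^d ⊗ ℂ^d (i.e. ρ^{T_B} ≥ 0), then its singlet fraction satisfies F(ρ) = Tr(ρ P₊) ≤ 1/d. -/

import Mathlib

open Matrix
open scoped ComplexOrder

/-- Partial transposition on the second factor of a bipartite matrix. -/
noncomputable def ptB {m n : ℕ}
    (M : Matrix (Fin m × Fin n) (Fin m × Fin n) ℂ) :
    Matrix (Fin m × Fin n) (Fin m × Fin n) ℂ :=
  fun p q => M (p.1, q.2) (q.1, p.2)

/-- The projector onto the maximally entangled state `ψ₊ = (1/√d) Σᵢ |i⟩⊗|i⟩`. -/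
noncomputable def Pplus (d : ℕ) : Matrix (Fin d × Fin d) (Fin d × Fin d) ℂ :=
  fun p q => (if p.1 = p.2 then 1 else 0) * (if q.1 = q.2 then 1 else 0) / d

lemma psd_entry_ineq {ι : Type*} [Fintype ι] [DecidableEq ι]
    {M : Matrix ι ι ℂ} (hM : M.PosSemidef) (p q : ι) :
    0 ≤ M p p + M q q - M p q - M q p := by
  have h := hM.dotProduct_mulVec_nonneg (fun i => (if i = p then 1 else 0) - (if i = q then 1 else 0))
  have e : (star (fun i => (if i = p then (1:ℂ) else 0) - (if i = q then 1 else 0)) ⬝ᵥ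
      (M *ᵥ fun i => (if i = p then (1:ℂ) else 0) - (if i = q then 1 else 0)))
      = M p p + M q q - M p q - M q p := by
    simp only [dotProduct, mulVec, Pi.star_apply, star_sub, apply_ite (star : ℂ → ℂ), star_one, star_zero,
      mul_sub, mul_ite, mul_one, mul_zero, sub_mul, ite_mul, one_mul, zero_mul,
      Finset.sum_sub_distrib, Finset.sum_ite_eq', Finset.mem_univ, if_true]
    ring
  rw [e] at h
  exact h

/-- If `ρ` is a PPT density matrix on `ℂ^d ⊗ ℂ^d`, then its singlet fraction
satisfies `F(ρ) = Tr(ρ P₊) ≤ 1/d`. -/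
theorem singlet_fraction_le_of_ppt (d : ℕ) (hd : 0 < d)
    (ρ : Matrix (Fin d × Fin d) (Fin d × Fin d) ℂ)
    (hρ : ρ.PosSemidef) (htr : ρ.trace = 1)
    (hppt : (ptB ρ).PosSemidef) :
    (ρ * Pplus d).trace ≤ ((d : ℂ))⁻¹ := by
  set σ := ptB ρ with hσ
  set S : ℂ := ∑ p : Fin d × Fin d, σ p (p.2, p.1) with hS
  -- trace of σ equals trace of ρ
  have htrσ : σ.trace = 1 := by
    rw [← htr]
    simp [trace, diag, hσ, ptB]
  -- sum manipulations via the swap bijection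
  have hswap1 : ∑ p : Fin d × Fin d, σ (p.2, p.1) (p.2, p.1) = σ.trace := by
    rw [trace]
    exact Fintype.sum_equiv (Equiv.prodComm (Fin d) (Fin d)) _ _ (fun p => rfl)
  have hswap2 : ∑ p : Fin d × Fin d, σ (p.2, p.1) p = S := by
    rw [hS]
    exact Fintype.sum_equiv (Equiv.prodComm (Fin d) (Fin d)) _ _ (fun p => rfl)
  -- the key inequality: S ≤ 1
  have hkey : 0 ≤ ∑ p : Fin d × Fin d,
      (σ p p + σ (p.2, p.1) (p.2, p.1) - σ p (p.2, p.1) - σ (p.2, p.1) p) :=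
    Finset.sum_nonneg fun p _ => psd_entry_ineq hppt p (p.2, p.1)
  have hsum : ∑ p : Fin d × Fin d,
      (σ p p + σ (p.2, p.1) (p.2, p.1) - σ p (p.2, p.1) - σ (p.2, p.1) p)
      = 2 - 2 * S := by
    simp only [Finset.sum_sub_distrib, Finset.sum_add_distrib, hswap1, hswap2, htrσ, ← hS]
    rw [show ∑ p : Fin d × Fin d, σ p p = σ.trace from rfl, htrσ]
    ring
  rw [hsum] at hkey
  have hS1 : S ≤ 1 := by
    have := add_le_add_left hkey (2 * S)
    rw [zero_add, sub_add_cancel] at this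
    have h2 : (0:ℂ) ≤ 2⁻¹ := by norm_num [Complex.le_def]
    calc S = 2⁻¹ * (2 * S) := by ring
    _ ≤ 2⁻¹ * 2 := mul_le_mul_of_nonneg_left this h2
    _ = 1 := by norm_num
  -- compute the trace
  have htrace : (ρ * Pplus d).trace = S * ((d:ℂ))⁻¹ := by
    rw [trace]
    simp only [diag, mul_apply, Pplus, hS, hσ, ptB]
    rw [Finset.sum_comm]
    rw [Fintype.sum_prod_type]
    simp only [Fintype.sum_prod_type, mul_comm, mul_ite, mul_zero, ite_mul, zero_mul,
      Finset.sum_ite_eq', Finset.mem_univ, if_true, div_eq_mul_inv, Finset.sum_mul]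
    simp only [ite_self, Finset.sum_ite_eq, Finset.mem_univ, if_true,
      Finset.sum_ite_irrel, Finset.sum_const_zero, Finset.sum_ite_eq']
    rw [Finset.sum_comm]
    simp [Finset.mul_sum]
  rw [htrace]
  calc S * ((d:ℂ))⁻¹ ≤ 1 * ((d:ℂ))⁻¹ := by
        refine mul_le_mul_of_nonneg_right hS1 ?_
        have h0 : (0:ℂ) ≤ (((d:ℝ)⁻¹ : ℝ) : ℂ) :=
          Complex.zero_le_real.mpr (inv_nonneg.mpr (Nat.cast_nonneg d))
        have he : (((d:ℝ)⁻¹ : ℝ) : ℂ) = ((d:ℂ))⁻¹ := by push_cast; ring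
        rwa [he] at h0
    _ = ((d:ℂ))⁻¹ := one_mul _
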